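/- Let $X$ be a biquandle with set-theoretic Yang-Baxter operator $R$, and let $C_n^D(X) \subseteq \mathbb{Z}[X^n]$ be the subgroup spanned by tuples $(x_1, \ldots, x_n)$ with $R(x_i, x_{i+1}) = (x_i, x_{i+1})$ for some $i$. Then the Yang-Baxter boundary map $\partial_n^{YB} = \sum_{i=1}^n (-1)^{i+1}(d_{i,n}^l - d_{i,n}^r)$ maps $C_n^D(X)$ into $C_{n-1}^D(X)$, i.e., the degenerate chains form a subcomplex of the set-theoretic Yang-Baxter chain complex. -/

import Mathlib

/-- Left pass of a mover through a list (each passed entry `y` becomes `R₂ (y, m)`,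
the mover continues as `R₁ (y, m)`). -/
def ybPassL {X : Type*} (R : X → X → X × X) : List X → X → List X × X
  | [], m => ([], m)
  | y :: t, m =>
      let p := ybPassL R t m
      ((R y p.2).2 :: p.1, (R y p.2).1)

/-- Right pass of a mover through a list (each passed entry `y` becomes `R₁ (m, y)`,
the mover continues as `R₂ (m, y)`). -/
def ybPassR {X : Type*} (R : X → X → X × X) : X → List X → List X
  | _, [] => []
  | m, y :: t => (R m y).1 :: ybPassR R (R m y).2 t

/-- The left Yang-Baxter face map `dᵢˡ : Xⁿ → Xⁿ⁻¹`. -/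
def ybFaceL {X : Type*} (R : X → X → X × X) (i : ℕ) (l : List X) : List X :=
  match l.drop (i - 1) with
  | [] => l.take (i - 1)
  | m :: suf => (ybPassL R (l.take (i - 1)) m).1 ++ suf

/-- The right Yang-Baxter face map `dᵢʳ : Xⁿ → Xⁿ⁻¹`. -/
def ybFaceR {X : Type*} (R : X → X → X × X) (i : ℕ) (l : List X) : List X :=
  match l.drop (i - 1) with
  | [] => l.take (i - 1)
  | m :: suf => l.take (i - 1) ++ ybPassR R m suf

/-- The Yang-Baxter boundary map `∂ = Σᵢ (-1)^{i+1} (dᵢˡ - dᵢʳ)`. -/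
noncomputable def ybBoundary {X : Type*} (R : X → X → X × X) :
    FreeAbelianGroup (List X) →+ FreeAbelianGroup (List X) :=
  FreeAbelianGroup.lift fun l =>
    ∑ i ∈ Finset.Icc 1 l.length, ((-1 : ℤ) ^ (i + 1)) •
      (FreeAbelianGroup.of (ybFaceL R i l) - FreeAbelianGroup.of (ybFaceR R i l))

/-- A tuple is degenerate when some adjacent pair is fixed by `R`. -/
def ybDegenerate {X : Type*} (R : X → X → X × X) (l : List X) : Prop :=
  ∃ (s t : List X) (a b : X), l = s ++ a :: b :: t ∧ R a b = (a, b)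
section Aux

variable {X : Type*} (R : X → X → X × X)

lemma ybPassL_length (l : List X) (m : X) : (ybPassL R l m).1.length = l.length := by
  induction l <;> simp [ybPassL, *]

lemma ybPassR_length (m : X) (l : List X) : (ybPassR R m l).length = l.length := by
  induction l generalizing m <;> simp [ybPassR, *]

lemma ybPassL_append (u v : List X) (m : X) :
    ybPassL R (u ++ v) m =
      ((ybPassL R u (ybPassL R v m).2).1 ++ (ybPassL R v m).1,
        (ybPassL R u (ybPassL R v m).2).2) := by
  induction u with
  | nil => simp [ybPassL]
  | cons y t ih => simp [ybPassL, ih]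

def ybMoverR {X : Type*} (R : X → X → X × X) : X → List X → X
  | m, [] => m
  | m, y :: t => ybMoverR R (R m y).2 t

lemma ybPassR_append (m : X) (u v : List X) :
    ybPassR R m (u ++ v) = ybPassR R m u ++ ybPassR R (ybMoverR R m u) v := by
  induction u generalizing m with
  | nil => simp [ybPassR, ybMoverR]
  | cons y t ih => simp [ybPassR, ybMoverR, ih]

lemma ybPassR_cons (m y : X) (t : List X) :
    ybPassR R m (y :: t) = (R m y).1 :: ybPassR R (R m y).2 t := rfl

lemma ybPassL_cons (y : X) (t : List X) (m : X) :
    ybPassL R (y :: t) m =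
      ((R y (ybPassL R t m).2).2 :: (ybPassL R t m).1, (R y (ybPassL R t m).2).1) := rfl

lemma ybFaceL_eq (A B : List X) (m : X) :
    ybFaceL R (A.length + 1) (A ++ m :: B) = (ybPassL R A m).1 ++ B := by
  have hd : (A ++ m :: B).drop (A.length + 1 - 1) = m :: B := by
    simp [List.drop_left]
  unfold ybFaceL
  rw [hd]
  simp [List.take_left]

lemma ybFaceR_eq (A B : List X) (m : X) :
    ybFaceR R (A.length + 1) (A ++ m :: B) = A ++ ybPassR R m B := by
  have hd : (A ++ m :: B).drop (A.length + 1 - 1) = m :: B := by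
    simp [List.drop_left]
  unfold ybFaceR
  rw [hd]
  simp [List.take_left]

lemma yb_fix_right {Rl Rr : X × X × X → X × X × X}
    (hRl : ∀ x y z : X, Rl (x, y, z) = ((R x y).1, (R x y).2, z))
    (hRr : ∀ x y z : X, Rr (x, y, z) = (x, (R y z).1, (R y z).2))
    (hYB : Rl ∘ Rr ∘ Rl = Rr ∘ Rl ∘ Rr)
    {a b : X} (hab : R a b = (a, b)) (m : X) :
    R (R m a).1 (R (R m a).2 b).1 = ((R m a).1, (R (R m a).2 b).1) := by
  have h := congrFun hYB (m, a, b)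
  simp only [Function.comp_apply, hRl, hRr, hab, Prod.mk.injEq] at h
  exact Prod.ext h.1 h.2.1

lemma yb_fix_left {Rl Rr : X × X × X → X × X × X}
    (hRl : ∀ x y z : X, Rl (x, y, z) = ((R x y).1, (R x y).2, z))
    (hRr : ∀ x y z : X, Rr (x, y, z) = (x, (R y z).1, (R y z).2))
    (hYB : Rl ∘ Rr ∘ Rl = Rr ∘ Rl ∘ Rr)
    {a b : X} (hab : R a b = (a, b)) (m : X) :
    R (R a (R b m).1).2 (R b m).2 = ((R a (R b m).1).2, (R b m).2) := by
  have h := congrFun hYB (a, b, m)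
  simp only [Function.comp_apply, hRl, hRr, hab, Prod.mk.injEq] at h
  exact Prod.ext h.2.1.symm h.2.2.symm

end Aux
/-- For a biquandle, the Yang-Baxter boundary of a degenerate `n`-chain is a degenerate
`(n-1)`-chain: the degenerate chains form a subcomplex. -/
theorem yb_boundary_degenerate {X : Type*} (R : X → X → X × X)
    (hbij : Function.Bijective fun p : X × X => R p.1 p.2)
    (Rl Rr : X × X × X → X × X × X)
    (hRl : ∀ x y z : X, Rl (x, y, z) = ((R x y).1, (R x y).2, z))
    (hRr : ∀ x y z : X, Rr (x, y, z) = (x, (R y z).1, (R y z).2))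
    (hYB : Rl ∘ Rr ∘ Rl = Rr ∘ Rl ∘ Rr)
    (hleft : ∀ a c : X, ∃! b : X, (R a b).1 = c)
    (hright : ∀ b d : X, ∃! a : X, (R a b).2 = d)
    (hfix : ∀ x : X, ∃! y : X, R x y = (x, y))
    (n : ℕ) (hn : 2 ≤ n) (l : List X) (hl : l.length = n) (hdeg : ybDegenerate R l) :
    ybBoundary R (FreeAbelianGroup.of l) ∈
      AddSubgroup.closure {c : FreeAbelianGroup (List X) |
        ∃ l' : List X, l'.length = n - 1 ∧ ybDegenerate R l' ∧
          c = FreeAbelianGroup.of l'} := by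
  classical
  obtain ⟨s, t, a, b, rfl, hab⟩ := hdeg
  have keyR := yb_fix_right R hRl hRr hYB hab
  have keyL := yb_fix_left R hRl hRr hYB hab
  simp only [List.length_append, List.length_cons] at hl
  simp only [ybBoundary, FreeAbelianGroup.lift_apply_of]
  have hm1 : s.length + 1 ∈ Finset.Icc 1 (s ++ a :: b :: t).length := by
    simp only [Finset.mem_Icc, List.length_append, List.length_cons]
    omega
  have hm2 : s.length + 2 ∈
      (Finset.Icc 1 (s ++ a :: b :: t).length).erase (s.length + 1) := by
    simp only [Finset.mem_erase, Finset.mem_Icc, List.length_append, List.length_cons]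
    omega
  rw [← Finset.add_sum_erase _ _ hm1, ← Finset.add_sum_erase _ _ hm2, ← add_assoc]
  -- the two "degenerate position" faces cancel
  have hfL1 : ybFaceL R (s.length + 1) (s ++ a :: b :: t) = (ybPassL R s a).1 ++ b :: t :=
    ybFaceL_eq R s (b :: t) a
  have hfR1 : ybFaceR R (s.length + 1) (s ++ a :: b :: t) = s ++ a :: ybPassR R b t := by
    rw [ybFaceR_eq R s (b :: t) a, ybPassR_cons, hab]
  have e1 : s ++ a :: b :: t = (s ++ [a]) ++ b :: t := by simp
  have e2 : s.length + 2 = (s ++ [a]).length + 1 := by simp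
  have hfL2 : ybFaceL R (s.length + 2) (s ++ a :: b :: t) = (ybPassL R s a).1 ++ b :: t := by
    rw [e1, e2, ybFaceL_eq, ybPassL_append]
    simp [ybPassL, hab]
  have hfR2 : ybFaceR R (s.length + 2) (s ++ a :: b :: t) = s ++ a :: ybPassR R b t := by
    rw [e1, e2, ybFaceR_eq]
    simp
  rw [hfL1, hfR1, hfL2, hfR2, ← add_smul,
    show ((-1 : ℤ)) ^ (s.length + 1 + 1) + (-1) ^ (s.length + 2 + 1) = 0 from by ring,
    zero_smul, zero_add]
  refine AddSubgroup.sum_mem _ fun i hi => ?_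
  simp only [Finset.mem_erase, Finset.mem_Icc, List.length_append, List.length_cons] at hi
  obtain ⟨hne2, hne1, hge1, hleN⟩ := hi
  rcases Nat.lt_or_ge i (s.length + 1) with hcase | hcase
  · -- the mover is strictly before the fixed pair
    obtain ⟨j, rfl⟩ : ∃ j, i = j + 1 := ⟨i - 1, by omega⟩
    have hj : j < s.length := by omega
    obtain ⟨A, m, B, rfl, hA⟩ : ∃ A m B, s = A ++ m :: B ∧ A.length = j := by
      refine ⟨s.take j, s[j], s.drop (j + 1), ?_, by simp [List.length_take]; omega⟩
      conv_lhs => rw [← List.take_append_drop j s]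
      rw [List.drop_eq_getElem_cons hj]
    simp only [List.length_append, List.length_cons] at hl
    have hsplit : (A ++ m :: B) ++ a :: b :: t = A ++ m :: (B ++ a :: b :: t) := by simp
    have hjA : j + 1 = A.length + 1 := by omega
    have hL : ybFaceL R (j + 1) ((A ++ m :: B) ++ a :: b :: t)
        = (ybPassL R A m).1 ++ (B ++ a :: b :: t) := by
      rw [hsplit, hjA, ybFaceL_eq]
    have hR : ybFaceR R (j + 1) ((A ++ m :: B) ++ a :: b :: t)
        = A ++ ybPassR R m (B ++ a :: b :: t) := by
      rw [hsplit, hjA, ybFaceR_eq]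
    rw [hL, hR, ybPassR_append, ybPassR_cons, ybPassR_cons]
    refine AddSubgroup.zsmul_mem _ (AddSubgroup.sub_mem _
      (AddSubgroup.subset_closure ?_) (AddSubgroup.subset_closure ?_)) _
    · refine ⟨_, ?_, ⟨(ybPassL R A m).1 ++ B, t, a, b, by simp, hab⟩, rfl⟩
      simp only [List.length_append, List.length_cons, ybPassL_length]
      omega
    · refine ⟨_, ?_, ⟨A ++ ybPassR R m B,
        ybPassR R (R (R (ybMoverR R m B) a).2 b).2 t,
        (R (ybMoverR R m B) a).1, (R (R (ybMoverR R m B) a).2 b).1,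
        by simp, keyR (ybMoverR R m B)⟩, rfl⟩
      simp only [List.length_append, List.length_cons, ybPassR_length]
      omega
  · -- the mover is strictly after the fixed pair
    obtain ⟨k, rfl⟩ : ∃ k, i = s.length + 3 + k := ⟨i - (s.length + 3), by omega⟩
    have hkt : k < t.length := by omega
    obtain ⟨C, m, D, rfl, hC⟩ : ∃ C m D, t = C ++ m :: D ∧ C.length = k := by
      refine ⟨t.take k, t[k], t.drop (k + 1), ?_, by simp [List.length_take]; omega⟩
      conv_lhs => rw [← List.take_append_drop k t]
      rw [List.drop_eq_getElem_cons hkt]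
    simp only [List.length_append, List.length_cons] at hl
    have hsplit : s ++ a :: b :: (C ++ m :: D) = (s ++ a :: b :: C) ++ m :: D := by simp
    have hidx : s.length + 3 + k = (s ++ a :: b :: C).length + 1 := by
      simp only [List.length_append, List.length_cons]; omega
    have hL : ybFaceL R (s.length + 3 + k) (s ++ a :: b :: (C ++ m :: D))
        = (ybPassL R (s ++ a :: b :: C) m).1 ++ D := by
      rw [hsplit, hidx, ybFaceL_eq]
    have hR : ybFaceR R (s.length + 3 + k) (s ++ a :: b :: (C ++ m :: D))
        = (s ++ a :: b :: C) ++ ybPassR R m D := by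
      rw [hsplit, hidx, ybFaceR_eq]
    rw [hL, hR, ybPassL_append, ybPassL_cons, ybPassL_cons]
    refine AddSubgroup.zsmul_mem _ (AddSubgroup.sub_mem _
      (AddSubgroup.subset_closure ?_) (AddSubgroup.subset_closure ?_)) _
    · refine ⟨_, ?_, ⟨(ybPassL R s (R a (R b (ybPassL R C m).2).1).1).1,
        (ybPassL R C m).1 ++ D,
        (R a (R b (ybPassL R C m).2).1).2, (R b (ybPassL R C m).2).2,
        by simp, keyL (ybPassL R C m).2⟩, rfl⟩
      simp only [List.length_append, List.length_cons, ybPassL_length]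
      omega
    · refine ⟨_, ?_, ⟨s, C ++ ybPassR R m D, a, b, by simp, hab⟩, rfl⟩
      simp only [List.length_append, List.length_cons, ybPassR_length]
      omega
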